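/- Let s = [[0,−1],[1,0]] and t = [[0,−1],[1,−1]] in SL(2,ℤ), and for positive integers m, ℓ define A(m,ℓ) = (s·t⁻¹)^m · (s·t)^ℓ in SL(2,ℤ). If (m,ℓ) and (m′,ℓ′) are distinct pairs of positive integers, then A(m,ℓ) is not conjugate in SL(2,ℤ) to either A(m′,ℓ′) or −A(m′,ℓ′); that is, the words x^m y^ℓ define pairwise distinct conjugacy classes in PSL₂(ℤ). -/
import Mathlib

open Matrix


/-- Key Pell-type descent lemma. -/
lemma core_lemma (P Q p q : ℤ) (hP : 1 ≤ P) (hQ : 1 ≤ Q) (hp : 1 ≤ p) (hq : 1 ≤ q)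
    (hpq : p * Q = q * P) :
    ∀ n : ℕ, ∀ u v : ℤ, u.natAbs = n →
      P * v ^ 2 - (p * Q) * (u * v) - Q * u ^ 2 = 1 → P = 1 := by
  have hP0 : (0:ℤ) < P := by linarith
  have hp0 : (0:ℤ) < p := by linarith
  have hq0 : (0:ℤ) < q := by linarith
  have hN : (1:ℤ) ≤ p * q := by nlinarith
  intro n
  induction n using Nat.strong_induction_on with
  | _ n ih =>
    have step : ∀ u v : ℤ, 0 < u →
        P * v ^ 2 - (p * Q) * (u * v) - Q * u ^ 2 = 1 →
        ∃ u₂ v₂ : ℤ, u₂.natAbs < u.natAbs ∧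
          P * v₂ ^ 2 - (p * Q) * (u₂ * v₂) - Q * u₂ ^ 2 = 1 := by
      intro u v hu heq
      have hI : P * (2 * (p * v) - (p * q) * u) ^ 2
          = 4 * p ^ 2 + P * (p * q) * ((p * q) + 4) * u ^ 2 := by
        linear_combination (4 * p ^ 2) * heq + (4 * p * (p * u * v + u ^ 2)) * hpq
      have hu1 : 1 ≤ u := hu
      have hu2 : 1 ≤ u ^ 2 := by nlinarith
      have hple : p ≤ q * P := by nlinarith
      have h2 : ((p * q) * u) ^ 2 < (2 * (p * v) - (p * q) * u) ^ 2 := by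
        have key : P * ((p * q) * u) ^ 2 < P * (2 * (p * v) - (p * q) * u) ^ 2 := by
          rw [hI]
          nlinarith [mul_pos hp0 hp0, mul_pos (mul_pos hP0 (mul_pos hp0 hq0)) (lt_of_lt_of_le one_pos hu2)]
        exact lt_of_mul_lt_mul_left key hP0.le
      have h3 : (2 * (p * v) - (p * q) * u) ^ 2 < (((p * q) + 4) * u) ^ 2 := by
        have key : P * (2 * (p * v) - (p * q) * u) ^ 2 < P * (((p * q) + 4) * u) ^ 2 := by
          rw [hI]
          nlinarith [mul_le_mul_of_nonneg_left hple hp0.le,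
            mul_nonneg (mul_nonneg hP0.le (by nlinarith : (0:ℤ) ≤ p * q)) (by linarith : (0:ℤ) ≤ u ^ 2 - 1),
            mul_pos hP0 (lt_of_lt_of_le one_pos hu2)]
        exact lt_of_mul_lt_mul_left key hP0.le
      have hW : (0:ℤ) ≤ ((p * q) + 4) * u := by positivity
      rcases le_or_gt 0 (2 * (p * v) - (p * q) * u) with hpos | hneg
      · have hb1 : (p * q) * u < 2 * (p * v) - (p * q) * u :=
          lt_of_pow_lt_pow_left₀ 2 hpos h2
        have hb2 : 2 * (p * v) - (p * q) * u < ((p * q) + 4) * u :=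
          lt_of_pow_lt_pow_left₀ 2 hW h3
        refine ⟨(p * q + 1) * u - p * v, -q * u + v, ?_, ?_⟩
        · have hlt1 : (p * q + 1) * u - p * v < u := by linarith
          have hlt2 : -u < (p * q + 1) * u - p * v := by linarith
          omega
        · linear_combination heq + (2 * u * v - q * u ^ 2) * hpq
      · have hsq : ((p * q) * u - 2 * (p * v)) ^ 2 = (2 * (p * v) - (p * q) * u) ^ 2 := by ring
        have habs : (p * q) * u - 2 * (p * v) < ((p * q) + 4) * u :=
          lt_of_pow_lt_pow_left₀ 2 hW (by rw [hsq]; exact h3)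
        have hb0 : (p * q) * u < (p * q) * u - 2 * (p * v) :=
          lt_of_pow_lt_pow_left₀ 2 (by linarith) (by rw [hsq]; exact h2)
        have hb1 : -(2 * u) < p * v := by linarith
        have hb2 : p * v < 0 := by linarith
        refine ⟨u + p * v, q * u + (p * q + 1) * v, ?_, ?_⟩
        · have hlt1 : u + p * v < u := by linarith
          have hlt2 : -u < u + p * v := by linarith
          omega
        · linear_combination heq +
            (-(2 * u * v) - q * u ^ 2 - 2 * p * v ^ 2 - 2 * p * q * (u * v)
              - p ^ 2 * q * v ^ 2) * hpq
    intro u v hn heq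
    rcases lt_trichotomy u 0 with hneg | h0 | hpos
    · have heq' : P * (-v) ^ 2 - (p * Q) * ((-u) * (-v)) - Q * (-u) ^ 2 = 1 := by
        linear_combination heq
      obtain ⟨u₂, v₂, hlt, heq₂⟩ := step (-u) (-v) (by omega) heq'
      exact ih u₂.natAbs (by omega) u₂ v₂ rfl heq₂
    · subst h0
      have hv : v ≠ 0 := by
        rintro rfl; simp at heq
      have hv2 : 1 ≤ v ^ 2 := by
        rcases hv.lt_or_gt with h | h <;> nlinarith
      have h1 : P ≤ 1 := by nlinarith [mul_nonneg hP0.le (by linarith : (0:ℤ) ≤ v ^ 2 - 1)]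
      linarith
    · obtain ⟨u₂, v₂, hlt, heq₂⟩ := step u v hpos heq
      exact ih u₂.natAbs (by omega) u₂ v₂ rfl heq₂


lemma powR (m : ℕ) : (!![1,0;-1,1] : Matrix (Fin 2) (Fin 2) ℤ) ^ m = !![1,0;-(m:ℤ),1] := by
  induction m with
  | zero => simp [Matrix.one_fin_two]
  | succ n ihn =>
      rw [pow_succ, ihn, Matrix.mul_fin_two]
      ext i j
      fin_cases i <;> fin_cases j <;> (simp; try push_cast; try ring_nf)

lemma powST (l : ℕ) : (!![-1,1;0,-1] : Matrix (Fin 2) (Fin 2) ℤ) ^ l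
    = (-1:ℤ)^l • !![1,-(l:ℤ);0,1] := by
  induction l with
  | zero => simp [Matrix.one_fin_two]
  | succ n ihn =>
      rw [pow_succ, ihn, smul_mul_assoc, Matrix.mul_fin_two]
      ext i j
      fin_cases i <;> fin_cases j <;> (simp [Matrix.smul_apply, pow_succ]; try push_cast; try ring_nf)

lemma coeA (s t : Matrix.SpecialLinearGroup (Fin 2) ℤ)
    (hs : s = ⟨!![0, -1; 1, 0], by decide⟩)
    (ht : t = ⟨!![0, -1; 1, -1], by decide⟩) (m l : ℕ) :
    (((s * t⁻¹) ^ m * (s * t) ^ l : Matrix.SpecialLinearGroup (Fin 2) ℤ) : Matrix (Fin 2) (Fin 2) ℤ)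
      = (-1:ℤ)^l • !![1, -(l:ℤ); -(m:ℤ), (m:ℤ)*(l:ℤ)+1] := by
  have hR : ((s * t⁻¹ : Matrix.SpecialLinearGroup (Fin 2) ℤ) : Matrix (Fin 2) (Fin 2) ℤ)
      = !![1,0;-1,1] := by
    subst hs ht
    show ((⟨!![0, -1; 1, 0], by decide⟩ : Matrix.SpecialLinearGroup (Fin 2) ℤ) : Matrix (Fin 2) (Fin 2) ℤ)
        * adjugate ((⟨!![0, -1; 1, -1], by decide⟩ : Matrix.SpecialLinearGroup (Fin 2) ℤ) : Matrix (Fin 2) (Fin 2) ℤ) = _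
    norm_num [Matrix.adjugate_fin_two, Matrix.mul_fin_two]
  have hST : ((s * t : Matrix.SpecialLinearGroup (Fin 2) ℤ) : Matrix (Fin 2) (Fin 2) ℤ)
      = !![-1,1;0,-1] := by
    subst hs ht
    show (!![0, -1; 1, 0] : Matrix (Fin 2) (Fin 2) ℤ) * !![0, -1; 1, -1] = _
    norm_num [Matrix.mul_fin_two]
  have : (((s * t⁻¹) ^ m * (s * t) ^ l : Matrix.SpecialLinearGroup (Fin 2) ℤ) : Matrix (Fin 2) (Fin 2) ℤ)
      = ((s * t⁻¹ : Matrix.SpecialLinearGroup (Fin 2) ℤ) : Matrix (Fin 2) (Fin 2) ℤ) ^ m *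
        ((s * t : Matrix.SpecialLinearGroup (Fin 2) ℤ) : Matrix (Fin 2) (Fin 2) ℤ) ^ l := rfl
  rw [this, hR, hST, powR, powST, mul_smul_comm, Matrix.mul_fin_two]
  ext i j
  fin_cases i <;> fin_cases j <;> (simp [Matrix.smul_apply]; try push_cast; try ring_nf)

lemma reduce (m l m' l' : ℕ) (hm : 0 < m) (hl : 0 < l) (hm' : 0 < m') (hl' : 0 < l')
    (P : Matrix (Fin 2) (Fin 2) ℤ) (hdet : P.det = 1) (σ : ℤ) (hσ : σ = 1 ∨ σ = -1)
    (hE : P * !![1, -(l:ℤ); -(m:ℤ), (m:ℤ)*(l:ℤ)+1]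
        = σ • (!![1, -(l':ℤ); -(m':ℤ), (m':ℤ)*(l':ℤ)+1] * P)) :
    m = m' ∧ l = l' := by
  have hM1 : (1:ℤ) ≤ (m:ℤ) := by exact_mod_cast hm
  have hL1 : (1:ℤ) ≤ (l:ℤ) := by exact_mod_cast hl
  have hM1' : (1:ℤ) ≤ (m':ℤ) := by exact_mod_cast hm'
  have hL1' : (1:ℤ) ≤ (l':ℤ) := by exact_mod_cast hl'
  have hadj : P * adjugate P = 1 := by
    rw [Matrix.mul_adjugate, hdet]; simp
  have hadj' : adjugate P * P = 1 := by
    rw [Matrix.adjugate_mul, hdet]; simp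
  have hB : !![1, -(l:ℤ); -(m:ℤ), (m:ℤ)*(l:ℤ)+1]
      = σ • (adjugate P * (!![1, -(l':ℤ); -(m':ℤ), (m':ℤ)*(l':ℤ)+1] * P)) := by
    rw [← mul_smul_comm, ← hE, ← mul_assoc, hadj', one_mul]
  have htr : (1 + ((m:ℤ)*(l:ℤ)+1)) = σ * (1 + ((m':ℤ)*(l':ℤ)+1)) := by
    have h2 := congrArg Matrix.trace hB
    rw [Matrix.trace_smul, Matrix.trace_mul_comm, mul_assoc, hadj, mul_one] at h2
    simpa [Matrix.trace_fin_two_of, smul_eq_mul] using h2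
  have hσ1 : σ = 1 := by
    rcases hσ with h | h
    · exact h
    · exfalso; rw [h] at htr; nlinarith
  rw [hσ1, one_smul] at hE
  have htrace : (m:ℤ) * l = (m':ℤ) * l' := by rw [hσ1] at htr; linarith
  -- entry equations
  have hfun : ∀ i j, (P * !![1, -(l:ℤ); -(m:ℤ), (m:ℤ)*(l:ℤ)+1]) i j
      = (!![1, -(l':ℤ); -(m':ℤ), (m':ℤ)*(l':ℤ)+1] * P) i j := fun i j => by rw [hE]
  have e00 := hfun 0 0
  have e01 := hfun 0 1
  have e10 := hfun 1 0
  have e11 := hfun 1 1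
  simp [Matrix.mul_apply, Fin.sum_univ_two] at e00 e01 e10 e11
  have e00' : (m:ℤ) * (P 0 1) = (l':ℤ) * (P 1 0) := by linear_combination e00
  have e10' : (m:ℤ) * (P 1 1) = (m':ℤ) * ((P 0 0) - (l':ℤ) * (P 1 0)) := by
    linear_combination -e10
  have hdet2 : P 0 0 * P 1 1 - P 0 1 * P 1 0 = 1 := by
    rw [Matrix.det_fin_two] at hdet; exact hdet
  -- gcd split of (P 0 1, P 1 0)
  obtain ⟨m₁, hm₁⟩ : (Nat.gcd m l') ∣ m := Nat.gcd_dvd_left m l'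
  obtain ⟨l₁, hl₁⟩ : (Nat.gcd m l') ∣ l' := Nat.gcd_dvd_right m l'
  obtain ⟨m₂, hm₂⟩ : (Nat.gcd m m') ∣ m := Nat.gcd_dvd_left m m'
  obtain ⟨m₂', hm₂'⟩ : (Nat.gcd m m') ∣ m' := Nat.gcd_dvd_right m m'
  have hg₁pos : 0 < Nat.gcd m l' := Nat.gcd_pos_of_pos_left _ hm
  have hg₂pos : 0 < Nat.gcd m m' := Nat.gcd_pos_of_pos_left _ hm
  have hm₁pos : 0 < m₁ := by rcases Nat.eq_zero_or_pos m₁ with h | h; · subst h; omega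
                             · exact h
  have hl₁pos : 0 < l₁ := by rcases Nat.eq_zero_or_pos l₁ with h | h; · subst h; omega
                             · exact h
  have hm₂pos : 0 < m₂ := by rcases Nat.eq_zero_or_pos m₂ with h | h; · subst h; omega
                             · exact h
  have hm₂'pos : 0 < m₂' := by rcases Nat.eq_zero_or_pos m₂' with h | h; · subst h; omega
                               · exact h
  have hcop₁ : Nat.Coprime m₁ l₁ := by
    have h1 : m / Nat.gcd m l' = m₁ := Nat.div_eq_of_eq_mul_right hg₁pos hm₁
    have h2 : l' / Nat.gcd m l' = l₁ := Nat.div_eq_of_eq_mul_right hg₁pos hl₁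
    rw [← h1, ← h2]; exact Nat.coprime_div_gcd_div_gcd hg₁pos
  have hcop₂ : Nat.Coprime m₂ m₂' := by
    have h1 : m / Nat.gcd m m' = m₂ := Nat.div_eq_of_eq_mul_right hg₂pos hm₂
    have h2 : m' / Nat.gcd m m' = m₂' := Nat.div_eq_of_eq_mul_right hg₂pos hm₂'
    rw [← h1, ← h2]; exact Nat.coprime_div_gcd_div_gcd hg₂pos
  -- cast equalities
  have hmZ₁ : (m:ℤ) = (Nat.gcd m l' : ℤ) * (m₁:ℤ) := by exact_mod_cast congrArg (Nat.cast : ℕ → ℤ) hm₁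
  have hlZ₁ : (l':ℤ) = (Nat.gcd m l' : ℤ) * (l₁:ℤ) := by exact_mod_cast congrArg (Nat.cast : ℕ → ℤ) hl₁
  have hmZ₂ : (m:ℤ) = (Nat.gcd m m' : ℤ) * (m₂:ℤ) := by exact_mod_cast congrArg (Nat.cast : ℕ → ℤ) hm₂
  have hmZ₂' : (m':ℤ) = (Nat.gcd m m' : ℤ) * (m₂':ℤ) := by exact_mod_cast congrArg (Nat.cast : ℕ → ℤ) hm₂'
  have hg₁Z : (0:ℤ) < (Nat.gcd m l' : ℤ) := by exact_mod_cast hg₁pos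
  have hg₂Z : (0:ℤ) < (Nat.gcd m m' : ℤ) := by exact_mod_cast hg₂pos
  have hl₁Z : (0:ℤ) < (l₁:ℤ) := by exact_mod_cast hl₁pos
  -- split b = P 0 1, c = P 1 0
  have e1 : (m₁:ℤ) * (P 0 1) = (l₁:ℤ) * (P 1 0) := by
    apply mul_left_cancel₀ (ne_of_gt hg₁Z)
    linear_combination e00' - (P 0 1) * hmZ₁ + (P 1 0) * hlZ₁
  have hcopZ₁ : IsCoprime ((l₁:ℤ)) ((m₁:ℤ)) := by
    rw [Nat.isCoprime_iff_coprime]; exact hcop₁.symm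
  obtain ⟨u, hu⟩ : ((l₁:ℤ)) ∣ (P 0 1) :=
    hcopZ₁.dvd_of_dvd_mul_left ⟨P 1 0, e1⟩
  have hc : P 1 0 = (m₁:ℤ) * u := by
    apply mul_left_cancel₀ (ne_of_gt hl₁Z)
    linear_combination -e1 + (m₁:ℤ) * hu
  -- split d = P 1 1, k = P 0 0 - l' * P 1 0
  have e2 : (m₂:ℤ) * (P 1 1) = (m₂':ℤ) * ((P 0 0) - (l':ℤ) * (P 1 0)) := by
    apply mul_left_cancel₀ (ne_of_gt hg₂Z)
    linear_combination e10' - (P 1 1) * hmZ₂ + ((P 0 0) - (l':ℤ) * (P 1 0)) * hmZ₂'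
  have hcopZ₂ : IsCoprime ((m₂':ℤ)) ((m₂:ℤ)) := by
    rw [Nat.isCoprime_iff_coprime]; exact hcop₂.symm
  obtain ⟨v, hv⟩ : ((m₂':ℤ)) ∣ (P 1 1) :=
    hcopZ₂.dvd_of_dvd_mul_left ⟨(P 0 0) - (l':ℤ) * (P 1 0), e2⟩
  have hm₂'Z : (0:ℤ) < (m₂':ℤ) := by exact_mod_cast hm₂'pos
  have hk : (P 0 0) - (l':ℤ) * (P 1 0) = (m₂:ℤ) * v := by
    apply mul_left_cancel₀ (ne_of_gt hm₂'Z)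
    linear_combination -e2 + (m₂:ℤ) * hv
  -- the Pell-type equation
  have hb1 : (1:ℤ) ≤ (m₂:ℤ) * (m₂':ℤ) := by exact_mod_cast Nat.one_le_iff_ne_zero.mpr (Nat.mul_pos hm₂pos hm₂'pos).ne'
  have hb2 : (1:ℤ) ≤ (m₁:ℤ) * (l₁:ℤ) := by exact_mod_cast Nat.one_le_iff_ne_zero.mpr (Nat.mul_pos hm₁pos hl₁pos).ne'
  have hb3 : (1:ℤ) ≤ (Nat.gcd m l' : ℤ) * (m₂':ℤ) := by
    exact_mod_cast Nat.one_le_iff_ne_zero.mpr (Nat.mul_pos hg₁pos hm₂'pos).ne'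
  have hb4 : (1:ℤ) ≤ (Nat.gcd m m' : ℤ) * (l₁:ℤ) := by
    exact_mod_cast Nat.one_le_iff_ne_zero.mpr (Nat.mul_pos hg₂pos hl₁pos).ne'
  have hpq : ((Nat.gcd m l' : ℤ) * (m₂':ℤ)) * ((m₁:ℤ) * (l₁:ℤ))
      = ((Nat.gcd m m' : ℤ) * (l₁:ℤ)) * ((m₂:ℤ) * (m₂':ℤ)) := by
    linear_combination ((l₁:ℤ) * (m₂':ℤ)) * (hmZ₂ - hmZ₁)
  have E : ((m₂:ℤ) * (m₂':ℤ)) * v ^ 2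
      - (((Nat.gcd m l' : ℤ) * (m₂':ℤ)) * ((m₁:ℤ) * (l₁:ℤ))) * ((-u) * v)
      - ((m₁:ℤ) * (l₁:ℤ)) * (-u) ^ 2 = 1 := by
    have h00 : P 0 0 = (m₂:ℤ) * v + (l':ℤ) * ((m₁:ℤ) * u) := by
      linear_combination hk + (l':ℤ) * hc
    rw [h00, hv, hu, hc] at hdet2
    linear_combination hdet2 - ((m₁:ℤ) * (m₂':ℤ) * u * v) * hlZ₁
  have hP1 : (m₂:ℤ) * (m₂':ℤ) = 1 :=
    core_lemma _ _ _ _ hb1 hb2 hb3 hb4 hpq (-u).natAbs (-u) v rfl E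
  have hP1n : m₂ * m₂' = 1 := by exact_mod_cast hP1
  have h21 : m₂ = 1 := Nat.eq_one_of_mul_eq_one_right hP1n
  have h21' : m₂' = 1 := Nat.eq_one_of_mul_eq_one_left hP1n
  rw [h21, Nat.mul_one] at hm₂
  rw [h21', Nat.mul_one] at hm₂'
  have hmm' : m = m' := hm₂.trans hm₂'.symm
  refine ⟨hmm', ?_⟩
  have hmne : (m:ℤ) ≠ 0 := by omega
  have : (l:ℤ) = (l':ℤ) := by
    apply mul_left_cancel₀ hmne
    rw [htrace, hmm']
  exact_mod_cast this

lemma conj_contra (m l m' l' : ℕ) (hm : 0 < m) (hl : 0 < l) (hm' : 0 < m') (hl' : 0 < l')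
    (P : Matrix (Fin 2) (Fin 2) ℤ) (hdet : P.det = 1) (δ : ℤ) (hδ : δ = 1 ∨ δ = -1)
    (hEq : P * ((-1:ℤ)^l • !![1, -(l:ℤ); -(m:ℤ), (m:ℤ)*(l:ℤ)+1])
      = δ • (((-1:ℤ)^l' • !![1, -(l':ℤ); -(m':ℤ), (m':ℤ)*(l':ℤ)+1]) * P)) :
    m = m' ∧ l = l' := by
  have hll : ((-1:ℤ)^l) * ((-1:ℤ)^l) = 1 := by
    rw [← pow_add]; exact Even.neg_one_pow ⟨l, rfl⟩
  have h2 : ((-1:ℤ)^l) • (P * !![1, -(l:ℤ); -(m:ℤ), (m:ℤ)*(l:ℤ)+1])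
      = (δ * (-1:ℤ)^l') • (!![1, -(l':ℤ); -(m':ℤ), (m':ℤ)*(l':ℤ)+1] * P) := by
    rw [← mul_smul_comm, ← smul_smul, ← smul_mul_assoc]
    exact hEq
  have h3 : P * !![1, -(l:ℤ); -(m:ℤ), (m:ℤ)*(l:ℤ)+1]
      = (((-1:ℤ)^l) * (δ * (-1:ℤ)^l')) • (!![1, -(l':ℤ); -(m':ℤ), (m':ℤ)*(l':ℤ)+1] * P) := by
    calc P * !![1, -(l:ℤ); -(m:ℤ), (m:ℤ)*(l:ℤ)+1]
        = (1:ℤ) • (P * !![1, -(l:ℤ); -(m:ℤ), (m:ℤ)*(l:ℤ)+1]) := (one_smul _ _).symm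
      _ = (((-1:ℤ)^l) * ((-1:ℤ)^l)) • (P * !![1, -(l:ℤ); -(m:ℤ), (m:ℤ)*(l:ℤ)+1]) := by
            rw [hll]
      _ = ((-1:ℤ)^l) • (((-1:ℤ)^l) • (P * !![1, -(l:ℤ); -(m:ℤ), (m:ℤ)*(l:ℤ)+1])) := by
            rw [smul_smul]
      _ = ((-1:ℤ)^l) • ((δ * (-1:ℤ)^l') • (!![1, -(l':ℤ); -(m':ℤ), (m':ℤ)*(l':ℤ)+1] * P)) := by
            rw [h2]
      _ = (((-1:ℤ)^l) * (δ * (-1:ℤ)^l')) • (!![1, -(l':ℤ); -(m':ℤ), (m':ℤ)*(l':ℤ)+1] * P) := by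
            rw [smul_smul]
  have hpow : ∀ k : ℕ, (-1:ℤ)^k = 1 ∨ (-1:ℤ)^k = -1 := fun k =>
    (Nat.even_or_odd k).imp (fun h => h.neg_one_pow) (fun h => h.neg_one_pow)
  have hσ : ((-1:ℤ)^l) * (δ * (-1:ℤ)^l') = 1 ∨ ((-1:ℤ)^l) * (δ * (-1:ℤ)^l') = -1 := by
    rcases hpow l with h | h <;> rcases hpow l' with h' | h' <;> rcases hδ with hd | hd <;>
      rw [h, h', hd] <;> norm_num
  exact reduce m l m' l' hm hl hm' hl' P hdet _ hσ h3


/-- The words `x^m y^ℓ` on the modular template define pairwise distinct conjugacy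
classes in `PSL₂(ℤ)`: with `s = [[0,-1],[1,0]]`, `t = [[0,-1],[1,-1]]` and
`A(m,ℓ) = (s t⁻¹)^m (s t)^ℓ` in `SL(2,ℤ)`, distinct pairs of positive integers `(m,ℓ)`
and `(m',ℓ')` give `A(m,ℓ)` not conjugate to `A(m',ℓ')` nor to `-A(m',ℓ')`. -/
theorem stmt_10 (s t : Matrix.SpecialLinearGroup (Fin 2) ℤ)
    (hs : s = ⟨!![0, -1; 1, 0], by decide⟩)
    (ht : t = ⟨!![0, -1; 1, -1], by decide⟩)
    (A : ℕ → ℕ → Matrix.SpecialLinearGroup (Fin 2) ℤ)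
    (hA : ∀ m ℓ, A m ℓ = (s * t⁻¹) ^ m * (s * t) ^ ℓ)
    (m ℓ m' ℓ' : ℕ) (hm : 0 < m) (hℓ : 0 < ℓ) (hm' : 0 < m') (hℓ' : 0 < ℓ')
    (hne : (m, ℓ) ≠ (m', ℓ')) :
    ¬ IsConj (A m ℓ) (A m' ℓ') ∧ ¬ IsConj (A m ℓ) (-(A m' ℓ')) := by
  constructor
  · intro hc
    obtain ⟨g, hg⟩ := isConj_iff.mp hc
    have hg' : g * A m ℓ = A m' ℓ' * g := by
      rw [← hg, inv_mul_cancel_right]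
    have hmat := congrArg (fun X : Matrix.SpecialLinearGroup (Fin 2) ℤ =>
      (X : Matrix (Fin 2) (Fin 2) ℤ)) hg'
    simp only [Matrix.SpecialLinearGroup.coe_mul] at hmat
    rw [hA m ℓ, hA m' ℓ', coeA s t hs ht m ℓ, coeA s t hs ht m' ℓ'] at hmat
    have hEq : (↑g : Matrix (Fin 2) (Fin 2) ℤ) *
        ((-1:ℤ)^ℓ • !![1, -(ℓ:ℤ); -(m:ℤ), (m:ℤ)*(ℓ:ℤ)+1])
        = (1:ℤ) • (((-1:ℤ)^ℓ' • !![1, -(ℓ':ℤ); -(m':ℤ), (m':ℤ)*(ℓ':ℤ)+1]) * (↑g : Matrix (Fin 2) (Fin 2) ℤ)) := by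
      rw [one_smul]; exact hmat
    obtain ⟨h1, h2⟩ := conj_contra m ℓ m' ℓ' hm hℓ hm' hℓ' (↑g) g.prop 1 (Or.inl rfl) hEq
    exact hne (by rw [h1, h2])
  · intro hc
    obtain ⟨g, hg⟩ := isConj_iff.mp hc
    have hg' : g * A m ℓ = -(A m' ℓ') * g := by
      rw [← hg, inv_mul_cancel_right]
    have hmat := congrArg (fun X : Matrix.SpecialLinearGroup (Fin 2) ℤ =>
      (X : Matrix (Fin 2) (Fin 2) ℤ)) hg'
    simp only [Matrix.SpecialLinearGroup.coe_mul] at hmat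
    have hcoeneg : ((-(A m' ℓ') : Matrix.SpecialLinearGroup (Fin 2) ℤ) : Matrix (Fin 2) (Fin 2) ℤ)
        = -((A m' ℓ' : Matrix.SpecialLinearGroup (Fin 2) ℤ) : Matrix (Fin 2) (Fin 2) ℤ) := rfl
    rw [hcoeneg] at hmat
    rw [hA m ℓ, hA m' ℓ', coeA s t hs ht m ℓ, coeA s t hs ht m' ℓ'] at hmat
    have hEq : (↑g : Matrix (Fin 2) (Fin 2) ℤ) *
        ((-1:ℤ)^ℓ • !![1, -(ℓ:ℤ); -(m:ℤ), (m:ℤ)*(ℓ:ℤ)+1])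
        = (-1:ℤ) • (((-1:ℤ)^ℓ' • !![1, -(ℓ':ℤ); -(m':ℤ), (m':ℤ)*(ℓ':ℤ)+1]) * (↑g : Matrix (Fin 2) (Fin 2) ℤ)) := by
      rw [neg_one_smul]
      rw [← neg_mul]
      exact hmat
    obtain ⟨h1, h2⟩ := conj_contra m ℓ m' ℓ' hm hℓ hm' hℓ' (↑g) g.prop (-1) (Or.inr rfl) hEq
    exact hne (by rw [h1, h2])
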